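/- For a Zinbiel-associative bialgebra H = K ⊕ H̄, the map e := Id − μ ∘ Δ_≺ restricted to H̄ (equivalently e = J − J⋆J + (J⋆J)⋆J − ⋯ with J = Id − uc and convolution f⋆g = ≺ ∘ (f⊗g) ∘ Δ) is an idempotent whose image is the space of primitives, and e(x ≺ y) = 0 for all x, y ∈ H̄. -/
import Mathlib


open scoped TensorProduct

/-- The (reduced) coradical filtration of a (non-counital) coalgebra `(Hb, δ)`:
`F_0 = 0` and `F_{r+1} = {x | δ(x) ∈ F_r ⊗ F_r}`. -/
noncomputable def redFiltration {K Hb : Type*} [Field K] [AddCommGroup Hb] [Module K Hb]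
    (δ : Hb →ₗ[K] Hb ⊗[K] Hb) : ℕ → Submodule K Hb
  | 0 => ⊥
  | r + 1 =>
      Submodule.comap δ
        (LinearMap.range (TensorProduct.map
          (redFiltration δ r).subtype (redFiltration δ r).subtype))

/-- For an associative-Zinbiel bialgebra `H = K·1 ⊕ H̄` (described here by its
augmentation ideal `H̄ = Hb`, with Zinbiel product `z`, reduced coassociative
coproduct `δ` and the induced reduced compatibility relation), the convolution
idempotent `e = J − J⋆J + (J⋆J)⋆J − ⋯` (with `J = Id − uc` and
`f ⋆ g = ≺ ∘ (f ⊗ g) ∘ Δ`) is an idempotent whose image is the space of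
primitives, and `e(x ≺ y) = 0` for all `x, y ∈ H̄`. -/
theorem convolution_idempotent_onto_primitives
    {K Hb : Type*} [Field K] [AddCommGroup Hb] [Module K Hb]
    (z : Hb →ₗ[K] Hb →ₗ[K] Hb)
    (hz : ∀ x y w : Hb, z (z x y) w = z x (z y w) + z x (z w y))
    (δ : Hb →ₗ[K] Hb ⊗[K] Hb)
    (hcoassoc : ∀ x : Hb,
      (TensorProduct.assoc K Hb Hb Hb) ((TensorProduct.map δ LinearMap.id) (δ x))
        = (TensorProduct.map LinearMap.id δ) (δ x))
    -- reduced form of the compatibility Δ(x ≺ y) = x₁≺y₁ ⊗ x₂*y₂ :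
    (hcompat : ∀ x y : Hb,
      δ (z x y)
        = x ⊗ₜ[K] y
          + (TensorProduct.map (z x) LinearMap.id) (δ y)
          + (TensorProduct.map LinearMap.id ((z + z.flip).flip y)) (δ x)
          + (TensorProduct.map (z.flip y) LinearMap.id) (δ x)
          + (TensorProduct.map (TensorProduct.lift z) (TensorProduct.lift (z + z.flip)))
              ((TensorProduct.tensorTensorTensorComm K Hb Hb Hb Hb)
                ((δ x) ⊗ₜ[K] (δ y))))
    (hconn : ∀ x : Hb, ∃ r : ℕ, x ∈ redFiltration δ r)
    -- the left-nested convolution powers S n = ⋆ⁿJ (on H̄, J = Id)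
    (S : ℕ → (Hb →ₗ[K] Hb))
    (hS1 : S 1 = LinearMap.id)
    (hSsucc : ∀ n : ℕ, 1 ≤ n →
      S (n+1) = (TensorProduct.lift z) ∘ₗ (TensorProduct.map (S n) LinearMap.id) ∘ₗ δ)
    -- e is the stabilized value of the alternating series Σ (−1)^{n-1} ⋆ⁿJ
    (e : Hb →ₗ[K] Hb)
    (he : ∀ x : Hb, ∃ N : ℕ, ∀ M : ℕ, N ≤ M →
      e x = ∑ n ∈ Finset.range M, ((-1 : K) ^ n) • S (n+1) x) :
    (Set.range e = {x : Hb | δ x = 0}) ∧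
    (∀ x y : Hb, e (z x y) = 0) ∧
    (e ∘ₗ e = e) := by
  classical
  set Z : Hb ⊗[K] Hb →ₗ[K] Hb := TensorProduct.lift z with hZdef
  have finrep : ∀ (p : Submodule K Hb) (t : Hb ⊗[K] Hb),
      t ∈ LinearMap.range (TensorProduct.map p.subtype p.subtype) →
      ∃ s : Finset (p × p), t = ∑ u ∈ s, (u.1 : Hb) ⊗ₜ[K] (u.2 : Hb) := by
    rintro p t ⟨t', rfl⟩
    obtain ⟨s, rfl⟩ := TensorProduct.exists_finset t'
    exact ⟨s, by simp [map_sum]⟩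
  -- L0 : the fundamental recursion  e x = x - Z ((e ⊗ id) (δ x))
  have L0 : ∀ x : Hb,
      e x = x - Z ((TensorProduct.map e LinearMap.id) (δ x)) := by
    intro x
    obtain ⟨s, hs⟩ := TensorProduct.exists_finset (δ x)
    obtain ⟨N, hN⟩ := he x
    choose Nf hNf using fun (u : Hb × Hb) => he u.1
    set M : ℕ := max N (s.sup Nf) with hM
    have hxM : e x = ∑ n ∈ Finset.range (M+1), ((-1 : K) ^ n) • S (n+1) x :=
      hN (M+1) (le_trans (le_max_left _ _) (Nat.le_succ M))
    have keyS : ∀ n : ℕ, S (n+1+1) x = ∑ u ∈ s, z (S (n+1) u.1) u.2 := by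
      intro n
      rw [hSsucc (n+1) (by omega)]
      simp [hs, map_sum, hZdef]
    have keyE : Z ((TensorProduct.map e LinearMap.id) (δ x))
        = ∑ n ∈ Finset.range M, ((-1 : K) ^ n) • ∑ u ∈ s, z (S (n+1) u.1) u.2 := by
      rw [hs, map_sum, map_sum]
      simp_rw [Finset.smul_sum]
      rw [Finset.sum_comm]
      refine Finset.sum_congr rfl fun u hu => ?_
      rw [TensorProduct.map_tmul,
        hNf u M (le_trans (Finset.le_sup hu) (le_max_right _ _))]
      simp [TensorProduct.sum_tmul, TensorProduct.smul_tmul', map_sum, hZdef]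
    rw [hxM, Finset.sum_range_succ', keyE]
    simp only [keyS, hS1, LinearMap.id_apply, pow_zero, one_smul, pow_succ,
      mul_smul, neg_one_smul, smul_neg, Finset.sum_neg_distrib]
    abel
  -- Eid : e is the identity on primitives
  have Eid : ∀ x : Hb, δ x = 0 → e x = x := by
    intro x hx
    obtain ⟨N, hN⟩ := he x
    rw [hN (N+1) (Nat.le_succ N), Finset.sum_range_succ']
    have hzero : ∀ n ∈ Finset.range N, ((-1 : K) ^ (n+1)) • S (n+1+1) x = 0 := by
      intro n _
      rw [hSsucc (n+1) (by omega)]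
      simp [hx]
    rw [Finset.sum_congr rfl hzero]
    simp [hS1]
  -- P : δ ∘ e = 0, by induction along the filtration
  have P : ∀ r : ℕ, ∀ x ∈ redFiltration δ r, δ (e x) = 0 := by
    intro r
    induction r with
    | zero =>
      intro x hx
      have hx0 : x = 0 := by simpa [redFiltration] using hx
      simp [hx0]
    | succ r ih =>
      intro x hx
      have hx' : δ x ∈ LinearMap.range (TensorProduct.map
          (redFiltration δ r).subtype (redFiltration δ r).subtype) := by
        simpa [redFiltration, Submodule.mem_comap] using hx
      obtain ⟨s, hs⟩ := finrep _ _ hx'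
      have h1 : δ (Z ((TensorProduct.map e LinearMap.id) (δ x)))
          = ∑ u ∈ s, ((e ↑u.1) ⊗ₜ[K] (↑u.2 : Hb)
              + (TensorProduct.map (z (e ↑u.1)) LinearMap.id) (δ ↑u.2)) := by
        rw [hs, map_sum, map_sum, map_sum]
        refine Finset.sum_congr rfl fun u _ => ?_
        have h0 : δ (e ↑u.1) = 0 := ih _ u.1.2
        rw [TensorProduct.map_tmul, hZdef, TensorProduct.lift.tmul, hcompat, h0]
        simp
      set G : (Hb ⊗[K] Hb) ⊗[K] Hb →ₗ[K] Hb ⊗[K] Hb :=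
        TensorProduct.map (Z ∘ₗ TensorProduct.map e LinearMap.id) LinearMap.id with hG
      have claim1 : (∑ u ∈ s, ((↑u.1 : Hb) ⊗ₜ[K] (↑u.2 : Hb) - (e ↑u.1) ⊗ₜ[K] (↑u.2 : Hb)))
          = G ((TensorProduct.map δ LinearMap.id) (δ x)) := by
        rw [hs, map_sum, map_sum]
        refine Finset.sum_congr rfl fun u _ => ?_
        rw [TensorProduct.map_tmul, hG, TensorProduct.map_tmul, ← TensorProduct.sub_tmul]
        simp only [LinearMap.comp_apply, LinearMap.id_apply]
        congr 1
        rw [L0 (↑u.1 : Hb), sub_sub_cancel]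
      have claim2 : (∑ u ∈ s, (TensorProduct.map (z (e ↑u.1)) LinearMap.id) (δ ↑u.2))
          = G ((TensorProduct.assoc K Hb Hb Hb).symm
              ((TensorProduct.map LinearMap.id δ) (δ x))) := by
        rw [hs, map_sum, map_sum, map_sum]
        refine Finset.sum_congr rfl fun u _ => ?_
        rw [TensorProduct.map_tmul, LinearMap.id_apply]
        induction (δ (↑u.2 : Hb)) using TensorProduct.induction_on with
        | zero => simp
        | tmul c d => simp [hG, hZdef]
        | add t1 t2 h1 h2 =>
          rw [map_add, TensorProduct.tmul_add, map_add, map_add, h1, h2]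
      have claim3 : (TensorProduct.map δ LinearMap.id) (δ x)
          = (TensorProduct.assoc K Hb Hb Hb).symm
              ((TensorProduct.map LinearMap.id δ) (δ x)) := by
        rw [← hcoassoc x, LinearEquiv.symm_apply_apply]
      rw [L0 x, map_sub, h1, Finset.sum_add_distrib, claim2, sub_add_eq_sub_sub]
      have hA : δ x - ∑ u ∈ s, (e ↑u.1) ⊗ₜ[K] (↑u.2 : Hb)
          = G ((TensorProduct.map δ LinearMap.id) (δ x)) := by
        rw [← claim1, Finset.sum_sub_distrib, ← hs]
      rw [hA, claim3, sub_self]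
  -- Q : e kills products, by induction on total filtration degree
  have Q : ∀ n r t : ℕ, r + t ≤ n → ∀ x ∈ redFiltration δ r, ∀ y ∈ redFiltration δ t,
      e (z x y) = 0 := by
    intro n
    induction n with
    | zero =>
      intro r t h x hx y hy
      have hr0 : r = 0 := by omega
      subst hr0
      have hx0 : x = 0 := by simpa [redFiltration] using hx
      simp [hx0]
    | succ n ih =>
      intro r t hrt x hx y hy
      rcases r with _ | r
      · have hx0 : x = 0 := by simpa [redFiltration] using hx
        simp [hx0]
      rcases t with _ | t
      · have hy0 : y = 0 := by simpa [redFiltration] using hy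
        simp [hy0]
      have hx' : δ x ∈ LinearMap.range (TensorProduct.map
          (redFiltration δ r).subtype (redFiltration δ r).subtype) := by
        simpa [redFiltration, Submodule.mem_comap] using hx
      have hy' : δ y ∈ LinearMap.range (TensorProduct.map
          (redFiltration δ t).subtype (redFiltration δ t).subtype) := by
        simpa [redFiltration, Submodule.mem_comap] using hy
      obtain ⟨sx, hsx⟩ := finrep _ _ hx'
      obtain ⟨sy, hsy⟩ := finrep _ _ hy'
      have ih1 : ∀ c : redFiltration δ t, e (z x ↑c) = 0 :=
        fun c => ih (r+1) t (by omega) x hx ↑c c.2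
      have ih2 : ∀ a : redFiltration δ r, e (z ↑a y) = 0 :=
        fun a => ih r (t+1) (by omega) ↑a a.2 y hy
      have ih3 : ∀ (a : redFiltration δ r) (c : redFiltration δ t), e (z ↑a ↑c) = 0 :=
        fun a c => ih r t (by omega) ↑a a.2 ↑c c.2
      rw [L0 (z x y), hcompat x y]
      simp only [map_add]
      have t1 : Z ((TensorProduct.map e LinearMap.id) (x ⊗ₜ[K] y)) = z (e x) y := by
        simp [hZdef]
      have t2 : Z ((TensorProduct.map e LinearMap.id)
          ((TensorProduct.map (z x) LinearMap.id) (δ y))) = 0 := by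
        rw [hsy, map_sum, map_sum, map_sum]
        refine Finset.sum_eq_zero fun v _ => ?_
        simp [hZdef, ih1 v.1]
      have t4 : Z ((TensorProduct.map e LinearMap.id)
          ((TensorProduct.map (z.flip y) LinearMap.id) (δ x))) = 0 := by
        rw [hsx, map_sum, map_sum, map_sum]
        refine Finset.sum_eq_zero fun u _ => ?_
        simp [hZdef, ih2 u.1]
      have hsum : (∑ u ∈ sx, z (e ↑u.1) ↑u.2) = x - e x := by
        have hL := L0 x
        rw [hsx, map_sum, map_sum] at hL
        simp only [TensorProduct.map_tmul, LinearMap.id_apply, hZdef,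
          TensorProduct.lift.tmul] at hL
        rw [hL]
        abel
      have t3 : Z ((TensorProduct.map e LinearMap.id)
          ((TensorProduct.map LinearMap.id ((z + z.flip).flip y)) (δ x)))
          = z x y - z (e x) y := by
        rw [hsx, map_sum, map_sum, map_sum]
        have hterm : ∀ u ∈ sx,
            Z ((TensorProduct.map e LinearMap.id)
              ((TensorProduct.map LinearMap.id ((z + z.flip).flip y))
                ((↑u.1 : Hb) ⊗ₜ[K] (↑u.2 : Hb))))
            = z (z (e ↑u.1) ↑u.2) y := by
          intro u _
          rw [TensorProduct.map_tmul, TensorProduct.map_tmul, hZdef,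
            TensorProduct.lift.tmul, hz]
          simp
        rw [Finset.sum_congr rfl hterm]
        rw [show (∑ u ∈ sx, z (z (e ↑u.1) ↑u.2) y)
            = z (∑ u ∈ sx, z (e ↑u.1) ↑u.2) y from by
          rw [map_sum, LinearMap.sum_apply]]
        rw [hsum]
        simp
      have t5 : Z ((TensorProduct.map e LinearMap.id)
          ((TensorProduct.map Z (TensorProduct.lift (z + z.flip)))
            ((TensorProduct.tensorTensorTensorComm K Hb Hb Hb Hb)
              ((δ x) ⊗ₜ[K] (δ y))))) = 0 := by
        rw [hsx, hsy]
        simp only [TensorProduct.sum_tmul, TensorProduct.tmul_sum, map_sum]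
        refine Finset.sum_eq_zero fun u _ => Finset.sum_eq_zero fun v _ => ?_
        simp [hZdef, ih3 v.1 u.1]
      rw [t1, t2, t3, t4, t5]
      abel
  have Pall : ∀ x : Hb, δ (e x) = 0 := fun x => (hconn x).elim fun r hr => P r x hr
  refine ⟨?_, ?_, ?_⟩
  · ext w
    simp only [Set.mem_range, Set.mem_setOf_eq]
    constructor
    · rintro ⟨v, rfl⟩
      exact Pall v
    · intro hw
      exact ⟨w, Eid w hw⟩
  · intro x y
    obtain ⟨r, hr⟩ := hconn x
    obtain ⟨t, ht⟩ := hconn y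
    exact Q (r+t) r t le_rfl x hr y ht
  · refine LinearMap.ext fun v => ?_
    rw [LinearMap.comp_apply]
    exact Eid (e v) (Pall v)
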